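/- Let (X₁,Y₁), …, (Xₙ,Yₙ) be independent bivariate random vectors with Xᵢ ≤_{st:wj} Yᵢ for each i. Then ∑ᵢ Xᵢ ≤_{st:wj} ∑ᵢ Yᵢ. -/

import Mathlib

open MeasureTheory ProbabilityTheory

/-- For independent real random variables `U`, `V`, the tail probability of the
sum is an integral of tail probabilities. -/
lemma stwj_aux_sum_tail {Ω : Type*} [MeasurableSpace Ω] (μ : Measure Ω)
    [IsProbabilityMeasure μ] (U V : Ω → ℝ) (hU : Measurable U) (hV : Measurable V)
    (h : IndepFun U V μ) (t : ℝ) :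
    μ {ω | U ω + V ω > t} = ∫⁻ x, μ {ω | V ω > t - x} ∂(μ.map U) := by
  have hmap := (indepFun_iff_map_prod_eq_prod_map_map hU.aemeasurable hV.aemeasurable).mp h
  have hset : {ω | U ω + V ω > t} = (fun ω => (U ω, V ω)) ⁻¹' {p : ℝ × ℝ | p.1 + p.2 > t} := rfl
  have hms : MeasurableSet {p : ℝ × ℝ | p.1 + p.2 > t} := by
    have : {p : ℝ × ℝ | p.1 + p.2 > t} = {p : ℝ × ℝ | t < p.1 + p.2} := rfl
    rw [this]
    exact measurableSet_lt measurable_const (measurable_fst.add measurable_snd)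
  rw [hset, ← Measure.map_apply (hU.prodMk hV) hms, hmap, Measure.prod_apply hms]
  refine lintegral_congr fun x => ?_
  have h1 : Prod.mk x ⁻¹' {p : ℝ × ℝ | p.1 + p.2 > t} = Set.Ioi (t - x) := by
    ext y
    simp only [Set.mem_preimage, Set.mem_setOf_eq, Set.mem_Ioi]
    constructor <;> intro <;> linarith
  rw [h1, Measure.map_apply hV measurableSet_Ioi]
  rfl

/-- Preservation under convolution: for independent bivariate vectors
`(X i, Y i)` with `X i ≤_{st:wj} Y i` for all `i`, we have
`∑ i, X i ≤_{st:wj} ∑ i, Y i`. -/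
theorem stwj_convolution {Ω : Type*} [MeasurableSpace Ω] (μ : Measure Ω)
    [IsProbabilityMeasure μ] (n : ℕ) (X Y : Fin n → Ω → ℝ)
    (hXm : ∀ i, Measurable (X i)) (hYm : ∀ i, Measurable (Y i))
    (hindep : iIndepFun (fun i ω => (X i ω, Y i ω)) μ)
    (h : ∀ i, ∀ t : ℝ, μ {ω | X i ω - Y i ω > t} ≤ μ {ω | Y i ω - X i ω > t}) :
    ∀ t : ℝ,
      μ {ω | (∑ i, X i ω) - (∑ i, Y i ω) > t} ≤
        μ {ω | (∑ i, Y i ω) - (∑ i, X i ω) > t} := by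
  set D : Fin n → Ω → ℝ := fun i ω => X i ω - Y i ω with hD
  set E : Fin n → Ω → ℝ := fun i ω => Y i ω - X i ω with hE
  have hDm : ∀ i, Measurable (D i) := fun i => (hXm i).sub (hYm i)
  have hEm : ∀ i, Measurable (E i) := fun i => (hYm i).sub (hXm i)
  have hDindep : iIndepFun D μ :=
    hindep.comp (fun _ p => p.1 - p.2) (fun _ => measurable_fst.sub measurable_snd)
  have hEindep : iIndepFun E μ :=
    hindep.comp (fun _ p => p.2 - p.1) (fun _ => measurable_snd.sub measurable_fst)
  -- main induction
  have main : ∀ s : Finset (Fin n), ∀ t : ℝ,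
      μ {ω | (∑ i ∈ s, D i ω) > t} ≤ μ {ω | (∑ i ∈ s, E i ω) > t} := by
    intro s
    induction s using Finset.induction_on with
    | empty => intro t; simp
    | @insert j s hj ih =>
      intro t
      -- mixed family : F j = D j, F i = E i otherwise
      set g : Fin n → ℝ × ℝ → ℝ :=
        fun i => if i = j then (fun p => p.1 - p.2) else (fun p => p.2 - p.1) with hg
      have hgm : ∀ i, Measurable (g i) := fun i => by
        by_cases hij : i = j <;>
          simp only [hg, hij, if_pos, if_neg, not_false_iff]
        · exact measurable_fst.sub measurable_snd
        · exact measurable_snd.sub measurable_fst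
      have hF : iIndepFun
          (fun i => g i ∘ (fun ω => (X i ω, Y i ω))) μ := hindep.comp g hgm
      set F : Fin n → Ω → ℝ := fun i => g i ∘ (fun ω => (X i ω, Y i ω)) with hFdef
      have hFm : ∀ i, Measurable (F i) := fun i => (hgm i).comp ((hXm i).prodMk (hYm i))
      have hFj : F j = D j := by
        ext ω; simp [hFdef, hg, hD]
      have hFs : ∀ ω, (∑ i ∈ s, F i ω) = ∑ i ∈ s, E i ω := by
        intro ω
        refine Finset.sum_congr rfl fun i hi => ?_
        have : i ≠ j := fun hij => hj (hij ▸ hi)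
        simp [hFdef, hg, this, hE]
      -- measurable sums
      have hSDm : Measurable (fun ω => ∑ i ∈ s, D i ω) := by
        exact Finset.measurable_sum s fun i _ => hDm i
      have hSEm : Measurable (fun ω => ∑ i ∈ s, E i ω) := by
        exact Finset.measurable_sum s fun i _ => hEm i
      -- independence facts
      have hindep1 : IndepFun (D j) (fun ω => ∑ i ∈ s, D i ω) μ := by
        have := (hDindep.indepFun_finsetSum_of_notMem hDm hj).symm
        convert this using 1
        ext ω; simp [Finset.sum_apply]
      have hindep2 : IndepFun (D j) (fun ω => ∑ i ∈ s, E i ω) μ := by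
        have := (hF.indepFun_finsetSum_of_notMem hFm hj).symm
        rw [hFj] at this
        convert this using 1
        ext ω
        simp only [Finset.sum_apply]
        exact (hFs ω).symm
      have hindep3 : IndepFun (fun ω => ∑ i ∈ s, E i ω) (E j) μ := by
        have := hEindep.indepFun_finsetSum_of_notMem hEm hj
        convert this using 1
        ext ω; simp [Finset.sum_apply]
      -- step 1
      have e1 : μ {ω | (∑ i ∈ insert j s, D i ω) > t}
          = ∫⁻ x, μ {ω | (∑ i ∈ s, D i ω) > t - x} ∂(μ.map (D j)) := by
        have : {ω | (∑ i ∈ insert j s, D i ω) > t}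
            = {ω | D j ω + (∑ i ∈ s, D i ω) > t} := by
          ext ω; simp [Finset.sum_insert hj]
        rw [this]
        exact stwj_aux_sum_tail μ (D j) _ (hDm j) hSDm hindep1 t
      have e2 : (∫⁻ x, μ {ω | (∑ i ∈ s, D i ω) > t - x} ∂(μ.map (D j)))
          ≤ ∫⁻ x, μ {ω | (∑ i ∈ s, E i ω) > t - x} ∂(μ.map (D j)) :=
        lintegral_mono fun x => ih (t - x)
      have e3 : (∫⁻ x, μ {ω | (∑ i ∈ s, E i ω) > t - x} ∂(μ.map (D j)))
          = μ {ω | D j ω + (∑ i ∈ s, E i ω) > t} :=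
        (stwj_aux_sum_tail μ (D j) _ (hDm j) hSEm hindep2 t).symm
      -- step 2
      have e4 : μ {ω | D j ω + (∑ i ∈ s, E i ω) > t}
          = ∫⁻ y, μ {ω | D j ω > t - y} ∂(μ.map (fun ω => ∑ i ∈ s, E i ω)) := by
        have hcomm : {ω | D j ω + (∑ i ∈ s, E i ω) > t}
            = {ω | (∑ i ∈ s, E i ω) + D j ω > t} := by
          ext ω; simp [add_comm]
        rw [hcomm]
        exact stwj_aux_sum_tail μ _ (D j) hSEm (hDm j)
          hindep2.symm t
      have e5 : (∫⁻ y, μ {ω | D j ω > t - y} ∂(μ.map (fun ω => ∑ i ∈ s, E i ω)))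
          ≤ ∫⁻ y, μ {ω | E j ω > t - y} ∂(μ.map (fun ω => ∑ i ∈ s, E i ω)) :=
        lintegral_mono fun y => h j (t - y)
      have e6 : (∫⁻ y, μ {ω | E j ω > t - y} ∂(μ.map (fun ω => ∑ i ∈ s, E i ω)))
          = μ {ω | (∑ i ∈ insert j s, E i ω) > t} := by
        have : {ω | (∑ i ∈ insert j s, E i ω) > t}
            = {ω | (∑ i ∈ s, E i ω) + E j ω > t} := by
          ext ω; simp [Finset.sum_insert hj, add_comm]
        rw [this]
        exact (stwj_aux_sum_tail μ _ (E j) hSEm (hEm j) hindep3 t).symm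
      calc μ {ω | (∑ i ∈ insert j s, D i ω) > t}
          = ∫⁻ x, μ {ω | (∑ i ∈ s, D i ω) > t - x} ∂(μ.map (D j)) := e1
        _ ≤ ∫⁻ x, μ {ω | (∑ i ∈ s, E i ω) > t - x} ∂(μ.map (D j)) := e2
        _ = μ {ω | D j ω + (∑ i ∈ s, E i ω) > t} := e3
        _ = ∫⁻ y, μ {ω | D j ω > t - y} ∂(μ.map (fun ω => ∑ i ∈ s, E i ω)) := e4
        _ ≤ ∫⁻ y, μ {ω | E j ω > t - y} ∂(μ.map (fun ω => ∑ i ∈ s, E i ω)) := e5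
        _ = μ {ω | (∑ i ∈ insert j s, E i ω) > t} := e6
  intro t
  have h1 : {ω | (∑ i, X i ω) - (∑ i, Y i ω) > t} = {ω | (∑ i, D i ω) > t} := by
    ext ω; simp [hD, Finset.sum_sub_distrib]
  have h2 : {ω | (∑ i, Y i ω) - (∑ i, X i ω) > t} = {ω | (∑ i, E i ω) > t} := by
    ext ω; simp [hE, Finset.sum_sub_distrib]
  rw [h1, h2]
  exact main Finset.univ t
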